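/- If condition (*) holds, then there exist constants ε ∈ (0,ρ) and η ∈ (0,1] such that for every x, y ∈ B̄(a,ρ), μ({z ∈ B̄(a,ρ) : infDist(z, segment [x,y]) < ε}) ≤ 1 − η. -/

import Mathlib

open MeasureTheory Metric Filter

private lemma seg_compact {E : Type*} [NormedAddCommGroup E] [NormedSpace ℝ E]
    (x y : E) : IsCompact (segment ℝ x y) := by
  rw [segment_eq_image]
  exact isCompact_Icc.image (by continuity)

private lemma infDist_seg_le {E : Type*} [NormedAddCommGroup E] [NormedSpace ℝ E]
    (z x y x' y' : E) :
    infDist z (segment ℝ x y) ≤ infDist z (segment ℝ x' y') + max (dist x x') (dist y y') := by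
  obtain ⟨w, hw, hwd⟩ := (seg_compact x' y').exists_infDist_eq_dist
    ⟨x', left_mem_segment ℝ x' y'⟩ z
  rw [segment_eq_image] at hw
  obtain ⟨t, ht, rfl⟩ := hw
  have hmem : (1 - t) • x + t • y ∈ segment ℝ x y := by
    rw [segment_eq_image]
    exact ⟨t, ht, rfl⟩
  have hM : max (dist x x') (dist y y') = max ‖x - x'‖ ‖y - y'‖ := by
    simp [dist_eq_norm]
  have h2 : dist ((1 - t) • x + t • y) ((1 - t) • x' + t • y') ≤ max (dist x x') (dist y y') := by
    have heq : (1 - t) • x + t • y - ((1 - t) • x' + t • y')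
        = (1 - t) • (x - x') + t • (y - y') := by
      simp [smul_sub]; abel
    rw [dist_eq_norm, heq, hM]
    have hmx := le_max_left ‖x - x'‖ ‖y - y'‖
    have hmy := le_max_right ‖x - x'‖ ‖y - y'‖
    have ht1 : (0:ℝ) ≤ 1 - t := by linarith [ht.2]
    calc ‖(1 - t) • (x - x') + t • (y - y')‖
        ≤ ‖(1 - t) • (x - x')‖ + ‖t • (y - y')‖ := norm_add_le _ _
      _ = (1 - t) * ‖x - x'‖ + t * ‖y - y'‖ := by
          rw [norm_smul, norm_smul, Real.norm_of_nonneg ht1, Real.norm_of_nonneg ht.1]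
      _ ≤ (1 - t) * max ‖x - x'‖ ‖y - y'‖ + t * max ‖x - x'‖ ‖y - y'‖ := by
          have := mul_le_mul_of_nonneg_left hmx ht1
          have := mul_le_mul_of_nonneg_left hmy ht.1
          linarith
      _ = max ‖x - x'‖ ‖y - y'‖ := by ring
  calc infDist z (segment ℝ x y) ≤ dist z ((1 - t) • x + t • y) :=
        infDist_le_dist_of_mem hmem
    _ ≤ dist z ((1 - t) • x' + t • y') + dist ((1 - t) • x + t • y) ((1 - t) • x' + t • y') :=
        dist_triangle_right _ _ _
    _ ≤ infDist z (segment ℝ x' y') + max (dist x x') (dist y y') := by rw [hwd]; gcongr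

/-- Euclidean case of Lemma 3.2. If the support of `μ` is not totally
contained in any segment (condition (*)), then there are `ε ∈ (0,ρ)` and `η ∈ (0,1]`
such that every `ε`-neighborhood (inside `B̄(a,ρ)`) of a segment with endpoints in
`B̄(a,ρ)` has `μ`-measure at most `1 - η`. -/
theorem stmt6 {n : ℕ} (hn : 1 ≤ n) (a : EuclideanSpace ℝ (Fin n)) (ρ : ℝ) (hρ : 0 < ρ)
    (μ : Measure (EuclideanSpace ℝ (Fin n))) [IsProbabilityMeasure μ]
    (hsupp : {x : EuclideanSpace ℝ (Fin n) | ∀ U ∈ nhds x, 0 < μ U} ⊆ ball a ρ)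
    (hstar : ∀ x ∈ closedBall a ρ, ∀ y ∈ closedBall a ρ, μ (segment ℝ x y) < 1) :
    ∃ ε ∈ Set.Ioo (0 : ℝ) ρ, ∃ η ∈ Set.Ioc (0 : ℝ) 1,
      ∀ x ∈ closedBall a ρ, ∀ y ∈ closedBall a ρ,
        μ {z ∈ closedBall a ρ | infDist z (segment ℝ x y) < ε} ≤ ENNReal.ofReal (1 - η) := by
  by_contra hcon
  push_neg at hcon
  have H : ∀ k : ℕ, ∃ x ∈ closedBall a ρ, ∃ y ∈ closedBall a ρ,
      ENNReal.ofReal (1 - 1 / (k + 2)) <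
        μ {z ∈ closedBall a ρ | infDist z (segment ℝ x y) < ρ / (k + 2)} := by
    intro k
    have hk2 : (0 : ℝ) < k + 2 := by positivity
    refine hcon (ρ / (k + 2)) ⟨by positivity, ?_⟩ (1 / (k + 2)) ⟨by positivity, ?_⟩
    · rw [div_lt_iff₀ hk2]; nlinarith
    · rw [div_le_one hk2]; linarith
  choose X hX Y hY hμk using H
  obtain ⟨⟨x, y⟩, hxy, φ, hφ, hconv⟩ :=
    ((isCompact_closedBall a ρ).prod (isCompact_closedBall a ρ)).tendsto_subseq
      (x := fun k => (X k, Y k)) (fun k => ⟨hX k, hY k⟩)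
  have hx : x ∈ closedBall a ρ := hxy.1
  have hy : y ∈ closedBall a ρ := hxy.2
  have hXc : Tendsto (fun j => X (φ j)) atTop (nhds x) :=
    (continuous_fst.tendsto _).comp hconv
  have hYc : Tendsto (fun j => Y (φ j)) atTop (nhds y) :=
    (continuous_snd.tendsto _).comp hconv
  have hφat : Tendsto (fun j : ℕ => (φ j : ℝ) + 2) atTop atTop :=
    tendsto_atTop_add_const_right _ 2 (tendsto_natCast_atTop_atTop.comp hφ.tendsto_atTop)
  -- each closed δ-neighborhood of segment x y has full measure
  have key : ∀ δ : ℝ, 0 < δ → μ {z | infDist z (segment ℝ x y) ≤ δ} = 1 := by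
    intro δ hδ
    refine le_antisymm prob_le_one ?_
    have hlim : Tendsto (fun k : ℕ => ENNReal.ofReal (1 - 1 / (k + 2)))
        atTop (nhds 1) := by
      have h0 : Tendsto (fun k : ℕ => 1 / ((k : ℝ) + 2)) atTop (nhds 0) :=
        tendsto_const_nhds.div_atTop
          (tendsto_atTop_add_const_right _ 2 tendsto_natCast_atTop_atTop)
      have : Tendsto (fun k : ℕ => 1 - 1 / ((k : ℝ) + 2)) atTop (nhds 1) := by
        simpa using (tendsto_const_nhds.sub h0)
      simpa using (ENNReal.tendsto_ofReal this)
    refine le_of_tendsto hlim ?_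
    rw [eventually_atTop]
    refine ⟨0, fun k _ => ?_⟩
    obtain ⟨N1, hN1⟩ := Metric.tendsto_atTop.mp hXc (δ / 3) (by positivity)
    obtain ⟨N2, hN2⟩ := Metric.tendsto_atTop.mp hYc (δ / 3) (by positivity)
    have hρ0 : Tendsto (fun j : ℕ => ρ / ((φ j : ℝ) + 2)) atTop (nhds 0) :=
      tendsto_const_nhds.div_atTop hφat
    obtain ⟨N3, hN3⟩ := eventually_atTop.mp
      (hρ0.eventually_lt_const (show (0:ℝ) < δ / 3 by positivity))
    set j := max (max N1 N2) (max N3 k) with hj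
    have hj1 : dist (X (φ j)) x < δ / 3 := hN1 j (le_trans (le_max_left _ _) (le_max_left _ _))
    have hj2 : dist (Y (φ j)) y < δ / 3 := hN2 j (le_trans (le_max_right _ _) (le_max_left _ _))
    have hj3 : ρ / ((φ j : ℝ) + 2) < δ / 3 :=
      hN3 j (le_trans (le_max_left _ _) (le_max_right _ _))
    have hj4 : k ≤ j := le_trans (le_max_right _ _) (le_max_right _ _)
    have hsub : {z | z ∈ closedBall a ρ ∧
        infDist z (segment ℝ (X (φ j)) (Y (φ j))) < ρ / (↑(φ j) + 2)}
        ⊆ {z | infDist z (segment ℝ x y) ≤ δ} := by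
      intro z hz
      have hmax : max (dist x (X (φ j))) (dist y (Y (φ j))) ≤ δ / 3 := by
        rw [dist_comm x, dist_comm y]
        exact max_le hj1.le hj2.le
      have hb : infDist z (segment ℝ x y) ≤ ρ / (↑(φ j) + 2) + δ / 3 :=
        calc infDist z (segment ℝ x y)
            ≤ infDist z (segment ℝ (X (φ j)) (Y (φ j))) +
              max (dist x (X (φ j))) (dist y (Y (φ j))) := infDist_seg_le z x y _ _
          _ ≤ ρ / (↑(φ j) + 2) + δ / 3 := add_le_add hz.2.le hmax
      simp only [Set.mem_setOf_eq]
      linarith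
    have hmono : ENNReal.ofReal (1 - 1 / (↑k + 2)) ≤ ENNReal.ofReal (1 - 1 / (↑(φ j) + 2)) := by
      apply ENNReal.ofReal_le_ofReal
      have hkj : (k : ℝ) ≤ φ j := by exact_mod_cast le_trans hj4 hφ.le_apply
      have h1 : (0:ℝ) < (k:ℝ) + 2 := by positivity
      have : 1 / ((φ j : ℝ) + 2) ≤ 1 / ((k : ℝ) + 2) := by
        apply one_div_le_one_div_of_le h1; linarith
      linarith
    calc ENNReal.ofReal (1 - 1 / (↑k + 2)) ≤ ENNReal.ofReal (1 - 1 / (↑(φ j) + 2)) := hmono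
      _ ≤ μ {z ∈ closedBall a ρ |
            infDist z (segment ℝ (X (φ j)) (Y (φ j))) < ρ / (↑(φ j) + 2)} := (hμk (φ j)).le
      _ ≤ μ {z | infDist z (segment ℝ x y) ≤ δ} := measure_mono hsub
  -- conclude μ (segment x y) = 1, contradicting (*)
  have hseg : μ (segment ℝ x y) = 1 := by
    have hiInter : ⋂ m : ℕ, {z | infDist z (segment ℝ x y) ≤ 1 / (m + 1)} = segment ℝ x y := by
      ext z
      simp only [Set.mem_iInter, Set.mem_setOf_eq]
      constructor
      · intro hz
        have h0 : infDist z (segment ℝ x y) ≤ 0 := by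
          by_contra hlt
          push_neg at hlt
          obtain ⟨m, hm⟩ := exists_nat_one_div_lt hlt
          exact absurd (hz m) (by push_neg; exact_mod_cast hm)
        have hz0 : infDist z (segment ℝ x y) = 0 := le_antisymm h0 infDist_nonneg
        have hcl : z ∈ closure (segment ℝ x y) :=
          (mem_closure_iff_infDist_zero ⟨x, left_mem_segment ℝ x y⟩).2 hz0
        rwa [(seg_compact x y).isClosed.closure_eq] at hcl
      · intro hz m
        rw [infDist_zero_of_mem hz]
        positivity
    have hmeas : ∀ m : ℕ, NullMeasurableSet {z | infDist z (segment ℝ x y) ≤ 1 / (m + 1)} μ :=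
      fun m =>
        (isClosed_le (continuous_infDist_pt _) continuous_const).measurableSet.nullMeasurableSet
    have hanti : Antitone fun m : ℕ => {z | infDist z (segment ℝ x y) ≤ 1 / (m + 1)} := by
      intro m m' hmm z hz
      simp only [Set.mem_setOf_eq] at hz ⊢
      refine hz.trans (one_div_le_one_div_of_le (by positivity) ?_)
      exact_mod_cast add_le_add_left (Nat.cast_le.2 hmm) 1
    have hT := tendsto_measure_iInter_atTop hmeas hanti ⟨0, measure_ne_top μ _⟩
    rw [hiInter] at hT
    have hconst : (fun m : ℕ => μ {z | infDist z (segment ℝ x y) ≤ 1 / (m + 1)})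
        = fun _ : ℕ => (1 : ENNReal) := funext fun m => key _ (by positivity)
    have : Tendsto (fun _ : ℕ => (1 : ENNReal)) atTop (nhds (μ (segment ℝ x y))) := by
      rw [← hconst]; exact hT
    exact (tendsto_nhds_unique tendsto_const_nhds this).symm
  exact absurd (hstar x hx y hy) (by rw [hseg]; exact lt_irrefl 1)
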